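/- arXiv:1506.05205 — 7 statements merged into one kernel-verified Lean document; each statement's English description precedes it below -/
import Mathlib

section
/- Let V be a finite-dimensional complex vector space, τ a nonzero complex number, and Y, Z endomorphisms of V satisfying [Y,Z] = τ·Z³. Then Z is nilpotent. -/
open Module LinearMap Polynomial Set Finset

variable {V : Type} [AddCommGroup V] [Module ℂ V] [FiniteDimensional ℂ V]

lemma trace_restrict_pow_aux (φ : Module.End ℂ V) (μ : ℂ) (k : ℕ) :
    LinearMap.trace ℂ (φ.maxGenEigenspace μ)
      ((φ.restrict (φ.mapsTo_maxGenEigenspace_of_comm rfl μ)) ^ k)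
      = μ ^ k * (Module.finrank ℂ (φ.maxGenEigenspace μ) : ℂ) := by
  set fμ := φ.restrict (φ.mapsTo_maxGenEigenspace_of_comm rfl μ) with hfμ
  have hnil : IsNilpotent (fμ - algebraMap ℂ (Module.End ℂ (φ.maxGenEigenspace μ)) μ) := by
    have heq : fμ - algebraMap ℂ (Module.End ℂ (φ.maxGenEigenspace μ)) μ
        = (φ - algebraMap ℂ (Module.End ℂ V) μ).restrict
          (φ.mapsTo_maxGenEigenspace_of_comm (Algebra.mul_sub_algebraMap_commutes φ μ) μ) := by
      ext x
      simp [hfμ, LinearMap.restrict_coe_apply, Module.algebraMap_end_apply]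
      rfl
    rw [heq]
    exact φ.isNilpotent_restrict_maxGenEigenspace_sub_algebraMap μ
  induction k with
  | zero => simp [LinearMap.trace_one]
  | succ k ih =>
      have hcomm : Commute (fμ ^ k) fμ := (Commute.refl fμ).pow_left k
      have := LinearMap.trace_comp_eq_mul_of_commute_of_isNilpotent μ hcomm hnil
      rw [pow_succ, Module.End.mul_eq_comp, this, ih]
      ring

lemma isNilpotent_of_trace_pow (φ : Module.End ℂ V)
    (htr : ∀ k : ℕ, 1 ≤ k → LinearMap.trace ℂ V (φ ^ k) = 0) :
    IsNilpotent φ := by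
  set N : ℂ → Submodule ℂ V := φ.maxGenEigenspace with hN
  have h_top : ⨆ μ, N μ = ⊤ := φ.iSup_maxGenEigenspace_eq_top
  have hds := DirectSum.isInternal_submodule_of_iSupIndep_of_iSup_eq_top
      φ.independent_maxGenEigenspace h_top
  have h_fin : {μ | N μ ≠ ⊥}.Finite :=
    WellFoundedGT.finite_ne_bot_of_iSupIndep φ.independent_maxGenEigenspace
  have hmaps : ∀ (k : ℕ) (μ : ℂ), MapsTo (φ ^ k) (N μ) (N μ) := fun k μ ↦
    φ.mapsTo_maxGenEigenspace_of_comm (Commute.pow_right rfl k) μ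
  -- trace formula
  have key : ∀ k : ℕ, 1 ≤ k →
      ∑ μ ∈ h_fin.toFinset, μ ^ k * (Module.finrank ℂ (N μ) : ℂ) = 0 := by
    intro k hk
    rw [← htr k hk, LinearMap.trace_eq_sum_trace_restrict' hds h_fin (hmaps k)]
    refine Finset.sum_congr rfl fun μ _ ↦ ?_
    rw [← trace_restrict_pow_aux φ μ k]
    congr 1
    exact Module.End.pow_restrict k (φ.mapsTo_maxGenEigenspace_of_comm rfl μ)
  -- all nonzero eigenvalues give trivial spaces
  have hzero : ∀ μ : ℂ, μ ≠ 0 → N μ = ⊥ := by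
    intro μ0 hμ0
    by_contra hne
    have hμ0mem : μ0 ∈ h_fin.toFinset := by simpa using hne
    set s := h_fin.toFinset
    set q : ℂ[X] := X * ∏ ν ∈ s.erase μ0, (X - C ν) with hq
    have h1 : ∑ μ ∈ s, (Module.finrank ℂ (N μ) : ℂ) * q.eval μ
        = (Module.finrank ℂ (N μ0) : ℂ) * q.eval μ0 := by
      refine Finset.sum_eq_single μ0 (fun ν hν hνne ↦ ?_) (fun habs ↦ absurd hμ0mem habs)
      have : q.eval ν = 0 := by
        rw [hq]
        simp only [eval_mul, eval_X, eval_prod, eval_sub, eval_C]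
        rw [Finset.prod_eq_zero (Finset.mem_erase.mpr ⟨hνne, hν⟩) (by ring)]
        ring
      rw [this, mul_zero]
    have h2 : q.eval μ0 ≠ 0 := by
      rw [hq]
      simp only [eval_mul, eval_X, eval_prod, eval_sub, eval_C]
      refine mul_ne_zero hμ0 (Finset.prod_ne_zero_iff.mpr fun ν hν ↦ ?_)
      have := (Finset.mem_erase.mp hν).1
      exact sub_ne_zero_of_ne (Ne.symm this)
    have h3 : ∑ μ ∈ s, (Module.finrank ℂ (N μ) : ℂ) * q.eval μ = 0 := by
      have heval : ∀ μ : ℂ, q.eval μ =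
          ∑ j ∈ Finset.range (q.natDegree + 1), q.coeff j * μ ^ j := fun μ ↦
        Polynomial.eval_eq_sum_range μ
      simp_rw [heval, Finset.mul_sum]
      rw [Finset.sum_comm]
      refine Finset.sum_eq_zero fun j _ ↦ ?_
      rcases Nat.eq_zero_or_pos j with rfl | hj
      · have : q.coeff 0 = 0 := by
          rw [hq, Polynomial.mul_coeff_zero, Polynomial.coeff_X_zero, zero_mul]
        simp [this]
      · have := key j hj
        calc ∑ μ ∈ s, (Module.finrank ℂ (N μ) : ℂ) * (q.coeff j * μ ^ j)
            = q.coeff j * ∑ μ ∈ s, μ ^ j * (Module.finrank ℂ (N μ) : ℂ) := by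
              rw [Finset.mul_sum]; refine Finset.sum_congr rfl fun μ _ ↦ by ring
          _ = 0 := by rw [this, mul_zero]
    have hrank : (Module.finrank ℂ (N μ0) : ℂ) ≠ 0 := by
      have : Module.finrank ℂ (N μ0) ≠ 0 := by
        rw [Ne, Submodule.finrank_eq_zero]
        exact hne
      exact_mod_cast this
    exact (mul_ne_zero hrank h2) (h1 ▸ h3)
  -- conclude nilpotency
  have htop0 : N 0 = ⊤ := by
    rw [← h_top]
    apply le_antisymm (le_iSup N 0)
    refine iSup_le fun μ ↦ ?_
    rcases eq_or_ne μ 0 with rfl | hμ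
    · exact le_rfl
    · rw [hzero μ hμ]; exact bot_le
  rw [LinearMap.isNilpotent_iff_charpoly, LinearMap.charpoly_eq_X_pow_iff]
  intro m
  have hm : m ∈ N 0 := htop0 ▸ Submodule.mem_top
  rw [hN, Module.End.mem_maxGenEigenspace] at hm
  obtain ⟨k, hk⟩ := hm
  exact ⟨k, by simpa using hk⟩

theorem stmt_0 (V : Type) [AddCommGroup V] [Module ℂ V] [FiniteDimensional ℂ V]
    (τ : ℂ) (hτ : τ ≠ 0) (Y Z : Module.End ℂ V)
    (h : Y * Z - Z * Y = τ • Z ^ 3) :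
    IsNilpotent Z := by
  have hZ3 : Z ^ 3 = τ⁻¹ • (Y * Z - Z * Y) := by
    rw [h, smul_smul, inv_mul_cancel₀ hτ, one_smul]
  have htr : ∀ n : ℕ, LinearMap.trace ℂ V (Z ^ (n + 3)) = 0 := by
    intro n
    have : Z ^ (n + 3) = τ⁻¹ • (Z ^ n * Y * Z - Z ^ (n + 1) * Y) := by
      rw [pow_add, hZ3, smul_sub, mul_sub, smul_sub]
      congr 1
      · rw [mul_smul_comm, mul_assoc]
      · rw [mul_smul_comm, pow_succ, mul_assoc]
    rw [this, map_smul, map_sub]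
    rw [LinearMap.trace_mul_comm ℂ (Z ^ n * Y) Z]
    rw [show Z * (Z ^ n * Y) = Z ^ (n + 1) * Y by rw [← mul_assoc, ← pow_succ']]
    simp
  have hnil3 : IsNilpotent (Z ^ 3) := by
    apply isNilpotent_of_trace_pow
    intro k hk
    obtain ⟨j, rfl⟩ := Nat.exists_eq_add_of_le hk
    rw [← pow_mul]
    have : 3 * (1 + j) = 3 * j + 3 := by ring
    rw [this]
    exact htr (3 * j)
  obtain ⟨n, hn⟩ := hnil3
  exact ⟨3 * n, by rw [pow_mul]; exact hn⟩
end

section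
/- For every nilpotent endomorphism Z of a finite-dimensional complex vector space V and every τ ∈ ℂ, there exist Y ∈ End(V) and v ∈ V such that [Y,Z'] = τ·(Z')³ for some Z' conjugate to Z, and v is a cyclic vector for (Y,Z'). Equivalently: for every partition λ of n = dim V there exists a triple (Y,Z,v) with [Y,Z] = τZ³, v cyclic, and Z nilpotent with Jordan type λ. -/
open Polynomial DirectSum

noncomputable section Model

abbrev Ida (a : ℕ) : Submodule ℂ[X] ℂ[X] := ℂ[X] ∙ ((X : ℂ[X]) ^ a)

abbrev Qa (a : ℕ) := ℂ[X] ⧸ Ida a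

instance instACGQa (a : ℕ) : AddCommGroup (Qa a) := Submodule.Quotient.addCommGroup _

def sPoly : ℂ[X] →ₗ[ℂ] ℂ[X] where
  toFun p := X * derivative p
  map_add' p q := by simp [mul_add]
  map_smul' c p := by simp [Polynomial.smul_eq_C_mul]; ring

lemma sPoly_apply (p : ℂ[X]) : sPoly p = X * derivative p := rfl

lemma sPoly_mem (a : ℕ) {p : ℂ[X]} (hp : p ∈ Ida a) : sPoly p ∈ Ida a := by
  rw [Submodule.mem_span_singleton] at hp ⊢
  obtain ⟨c, rfl⟩ := hp
  rcases Nat.eq_zero_or_pos a with h0 | h1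
  · subst h0
    exact ⟨sPoly (c • 1), by simp⟩
  · refine ⟨X * derivative c + C (a : ℂ) * c, ?_⟩
    have hxa : (X : ℂ[X]) * X ^ (a - 1) = X ^ a := by
      rw [← pow_succ']; congr 1; omega
    rw [smul_eq_mul, smul_eq_mul, sPoly_apply, derivative_mul, derivative_X_pow, ← hxa]
    ring

def Sq (a : ℕ) : Qa a →ₗ[ℂ] Qa a :=
  (Submodule.liftQ ((Ida a).restrictScalars ℂ)
      (((Ida a).mkQ.restrictScalars ℂ).comp sPoly)
      (fun p hp => by
        simp only [LinearMap.mem_ker, LinearMap.comp_apply, LinearMap.restrictScalars_apply,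
          Submodule.mkQ_apply, Submodule.Quotient.mk_eq_zero]
        exact sPoly_mem a hp)).comp
    (Submodule.Quotient.restrictScalarsEquiv ℂ (Ida a)).symm.toLinearMap

lemma Sq_mk (a : ℕ) (p : ℂ[X]) :
    Sq a (Submodule.Quotient.mk p) = Submodule.Quotient.mk (X * derivative p) := by
  rw [Sq, LinearMap.comp_apply, LinearEquiv.coe_toLinearMap,
    Submodule.Quotient.restrictScalarsEquiv_symm_mk, Submodule.liftQ_apply]
  rfl

lemma Sq_comm (a : ℕ) (q : Qa a) :
    Sq a ((X : ℂ[X]) • q) - (X : ℂ[X]) • Sq a q = (X : ℂ[X]) • q := by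
  obtain ⟨p, rfl⟩ := Submodule.Quotient.mk_surjective _ q
  rw [← Submodule.Quotient.mk_smul, smul_eq_mul, Sq_mk, Sq_mk,
    ← Submodule.Quotient.mk_smul, smul_eq_mul, ← Submodule.Quotient.mk_sub]
  exact congrArg _ (by simp [derivative_mul]; ring)

variable {m : ℕ}

abbrev MM (F : Fin m → ℕ) := ⨁ k : Fin m, Qa (F k)

example (F : Fin m → ℕ) : Module ℂ[X] (MM F) := inferInstance
example (F : Fin m → ℕ) : Module ℂ (MM F) := inferInstance
example (F : Fin m → ℕ) : IsScalarTower ℂ ℂ[X] (MM F) := inferInstance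
example (F : Fin m → ℕ) : SMulCommClass ℂ ℂ[X] (MM F) := inferInstance

def ZM (F : Fin m → ℕ) : Module.End ℂ (MM F) :=
  ((LinearMap.lsmul ℂ[X] (MM F)) (X : ℂ[X])).restrictScalars ℂ

lemma ZM_apply (F : Fin m → ℕ) (x : MM F) : ZM F x = (X : ℂ[X]) • x := rfl

def SM (F : Fin m → ℕ) : Module.End ℂ (MM F) :=
  DirectSum.toModule ℂ (Fin m) (MM F)
    (fun k => (DirectSum.lof ℂ (Fin m) (fun j => Qa (F j)) k).comp (Sq (F k)))

lemma smul_of (F : Fin m → ℕ) (r : ℂ[X]) (k : Fin m) (q : Qa (F k)) :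
    r • (DirectSum.of (fun j => Qa (F j)) k q) = DirectSum.of (fun j => Qa (F j)) k (r • q) := by
  rw [← DirectSum.lof_eq_of ℂ[X], ← DirectSum.lof_eq_of ℂ[X], ← map_smul]

lemma SM_of (F : Fin m → ℕ) (k : Fin m) (q : Qa (F k)) :
    SM F (DirectSum.of (fun j => Qa (F j)) k q)
      = DirectSum.of (fun j => Qa (F j)) k (Sq (F k) q) := by
  rw [← DirectSum.lof_eq_of ℂ, SM, DirectSum.toModule_lof, LinearMap.comp_apply,
    DirectSum.lof_eq_of]

lemma SZ_comm (F : Fin m → ℕ) (x : MM F) :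
    SM F ((X : ℂ[X]) • x) - (X : ℂ[X]) • SM F x = (X : ℂ[X]) • x := by
  induction x using DirectSum.induction_on with
  | zero => rw [smul_zero, map_zero, smul_zero, sub_zero]
  | of k q =>
      rw [smul_of, SM_of, SM_of, smul_of, ← map_sub, Sq_comm]
  | add x y hx hy =>
      rw [smul_add, map_add, map_add, smul_add, ← sub_add_sub_comm, hx, hy]

lemma Ida_le {a b : ℕ} (h : b ≤ a) : Ida a ≤ Ida b := by
  rw [Submodule.span_le, Set.singleton_subset_iff, SetLike.mem_coe,
    Submodule.mem_span_singleton]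
  exact ⟨X ^ (a - b), by rw [smul_eq_mul, ← pow_add]; congr 1; omega⟩

def factorQ {a b : ℕ} (h : b ≤ a) : Qa a →ₗ[ℂ[X]] Qa b :=
  Submodule.mapQ (Ida a) (Ida b) LinearMap.id (fun x hx => Ida_le h hx)

lemma factorQ_mk {a b : ℕ} (h : b ≤ a) (p : ℂ[X]) :
    factorQ h (Submodule.Quotient.mk p) = Submodule.Quotient.mk p := by
  rw [factorQ, Submodule.mapQ_apply]; rfl

def Y1c {F : Fin m → ℕ} (hF : Antitone F) (k : Fin m) : Qa (F k) →ₗ[ℂ[X]] MM F :=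
  if h : (k : ℕ) + 1 < m then
    (DirectSum.lof ℂ[X] (Fin m) (fun j => Qa (F j)) ⟨(k : ℕ) + 1, h⟩).comp
      (factorQ (hF (le_of_lt (by exact Fin.mk_lt_mk.mpr (Nat.lt_succ_self _) : k < ⟨(k : ℕ) + 1, h⟩))))
  else 0

def Y1 {F : Fin m → ℕ} (hF : Antitone F) : Module.End ℂ (MM F) :=
  (DirectSum.toModule ℂ[X] (Fin m) (MM F) (Y1c hF)).restrictScalars ℂ

lemma Y1_smul {F : Fin m → ℕ} (hF : Antitone F) (x : MM F) :
    Y1 hF ((X : ℂ[X]) • x) = (X : ℂ[X]) • Y1 hF x :=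
  map_smul (DirectSum.toModule ℂ[X] (Fin m) (MM F) (Y1c hF)) _ _

def YM (τ : ℂ) {F : Fin m → ℕ} (hF : Antitone F) : Module.End ℂ (MM F) :=
  τ • (ZM F * ZM F * SM F) + Y1 hF

lemma YM_comm (τ : ℂ) {F : Fin m → ℕ} (hF : Antitone F) :
    YM τ hF * ZM F - ZM F * YM τ hF = τ • (ZM F) ^ 3 := by
  apply LinearMap.ext
  intro x
  have hS := SZ_comm F x
  have hS' : SM F ((X:ℂ[X]) • x) = (X:ℂ[X]) • x + (X:ℂ[X]) • SM F x :=
    eq_add_of_sub_eq hS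
  simp only [YM, LinearMap.sub_apply, LinearMap.add_apply, Module.End.mul_apply,
    LinearMap.smul_apply, pow_succ, pow_zero, one_mul, LinearMap.map_add, LinearMap.map_smul,
    Y1_smul, ZM_apply, hS']
  rw [smul_add]
  abel

def vM (F : Fin m → ℕ) (hm : 0 < m) : MM F :=
  DirectSum.lof ℂ[X] (Fin m) (fun j => Qa (F j)) ⟨0, hm⟩ (Submodule.Quotient.mk 1)

theorem model_cyclic (τ : ℂ) {F : Fin m → ℕ} (hF : Antitone F) (hm : 0 < m)
    (W : Submodule ℂ (MM F)) (hv : vM F hm ∈ W)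
    (hY : ∀ w ∈ W, YM τ hF w ∈ W) (hZ : ∀ w ∈ W, ZM F w ∈ W) : W = ⊤ := by
  -- W is closed under polynomial scalar multiplication
  have hXpow : ∀ (n : ℕ) (w : MM F), w ∈ W → ((X : ℂ[X]) ^ n) • w ∈ W := by
    intro n
    induction n with
    | zero => intro w hw; simpa using hw
    | succ n ih =>
        intro w hw
        have := hZ _ (ih w hw)
        rwa [ZM_apply, ← mul_smul, ← pow_succ'] at this
  have hsmul : ∀ (p : ℂ[X]) (w : MM F), w ∈ W → p • w ∈ W := by
    intro p
    induction p using Polynomial.induction_on' with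
    | add f g hf hg =>
        intro w hw
        rw [add_smul]
        exact W.add_mem (hf w hw) (hg w hw)
    | monomial n c =>
        intro w hw
        rw [← C_mul_X_pow_eq_monomial, mul_smul, ← Polynomial.algebraMap_eq,
          algebraMap_smul]
        exact W.smul_mem c (hXpow n w hw)
  -- generators of each block
  have hgen : ∀ (j : ℕ) (h : j < m),
      DirectSum.lof ℂ[X] (Fin m) (fun i => Qa (F i)) ⟨j, h⟩ (Submodule.Quotient.mk 1) ∈ W := by
    intro j
    induction j with
    | zero => intro h; exact hv
    | succ j ih =>
        intro h
        have hj : j < m := Nat.lt_of_succ_lt h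
        have hw := ih hj
        have hYw := hY _ hw
        have hS1 : SM F (DirectSum.lof ℂ[X] (Fin m) (fun i => Qa (F i)) ⟨j, hj⟩
            (Submodule.Quotient.mk 1)) = 0 := by
          rw [DirectSum.lof_eq_of, SM_of, Sq_mk]
          simp
        have hY1 : Y1 hF (DirectSum.lof ℂ[X] (Fin m) (fun i => Qa (F i)) ⟨j, hj⟩
            (Submodule.Quotient.mk 1))
            = DirectSum.lof ℂ[X] (Fin m) (fun i => Qa (F i)) ⟨j + 1, h⟩
              (Submodule.Quotient.mk 1) := by
          rw [Y1, LinearMap.restrictScalars_apply, DirectSum.toModule_lof, Y1c]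
          rw [dif_pos (show ((⟨j, hj⟩ : Fin m) : ℕ) + 1 < m from h)]
          rw [LinearMap.comp_apply, factorQ_mk]
        have hcompute : YM τ hF (DirectSum.lof ℂ[X] (Fin m) (fun i => Qa (F i)) ⟨j, hj⟩
            (Submodule.Quotient.mk 1))
            = DirectSum.lof ℂ[X] (Fin m) (fun i => Qa (F i)) ⟨j + 1, h⟩
              (Submodule.Quotient.mk 1) := by
          rw [YM, LinearMap.add_apply, LinearMap.smul_apply, Module.End.mul_apply,
            Module.End.mul_apply, hS1, map_zero, map_zero, smul_zero, zero_add, hY1]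
        rw [hcompute] at hYw
        exact hYw
  -- every single component is in W
  have hof : ∀ (k : Fin m) (q : Qa (F k)), DirectSum.of (fun i => Qa (F i)) k q ∈ W := by
    intro k q
    obtain ⟨p, rfl⟩ := Submodule.Quotient.mk_surjective _ q
    have : DirectSum.of (fun i => Qa (F i)) k (Submodule.Quotient.mk p)
        = p • DirectSum.lof ℂ[X] (Fin m) (fun i => Qa (F i)) k (Submodule.Quotient.mk 1) := by
      rw [← map_smul, ← Submodule.Quotient.mk_smul, smul_eq_mul, mul_one, DirectSum.lof_eq_of]
    rw [this]
    exact hsmul p _ (by simpa using hgen (k : ℕ) k.isLt)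
  rw [eq_top_iff]
  intro x _
  induction x using DirectSum.induction_on with
  | zero => exact W.zero_mem
  | of k q => exact hof k q
  | add x y hx hy => exact W.add_mem (hx trivial) (hy trivial)


-- transfer lemma : trivial case
lemma aux_trivial (V : Type) [AddCommGroup V] [Module ℂ V] [Subsingleton V]
    (τ : ℂ) (Z : Module.End ℂ V) :
    ∃ (Y : Module.End ℂ V) (g : (Module.End ℂ V)ˣ) (v : V),
      (Y * ((g : Module.End ℂ V) * Z * ↑g⁻¹) - ((g : Module.End ℂ V) * Z * ↑g⁻¹) * Y
        = τ • ((g : Module.End ℂ V) * Z * ↑g⁻¹) ^ 3) ∧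
      (∀ W : Submodule ℂ V, v ∈ W → (∀ w ∈ W, Y w ∈ W) →
        (∀ w ∈ W, ((g : Module.End ℂ V) * Z * ↑g⁻¹) w ∈ W) → W = ⊤) := by
  refine ⟨0, 1, 0, Subsingleton.elim _ _, ?_⟩
  intro W hv _ _
  rw [eq_top_iff]
  intro x _
  rw [Subsingleton.elim x (0 : V)]
  exact hv

-- transfer lemma : main case
lemma aux_transfer (V : Type) [AddCommGroup V] [Module ℂ V]
    (τ : ℂ) (Z : Module.End ℂ V) {m : ℕ} {F : Fin m → ℕ} (hF : Antitone F) (hm : 0 < m)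
    (ψ : V ≃ₗ[ℂ] MM F) (hψZ : ∀ x : V, ψ (Z x) = (X : ℂ[X]) • ψ x) :
    ∃ (Y : Module.End ℂ V) (g : (Module.End ℂ V)ˣ) (v : V),
      (Y * ((g : Module.End ℂ V) * Z * ↑g⁻¹) - ((g : Module.End ℂ V) * Z * ↑g⁻¹) * Y
        = τ • ((g : Module.End ℂ V) * Z * ↑g⁻¹) ^ 3) ∧
      (∀ W : Submodule ℂ V, v ∈ W → (∀ w ∈ W, Y w ∈ W) →
        (∀ w ∈ W, ((g : Module.End ℂ V) * Z * ↑g⁻¹) w ∈ W) → W = ⊤) := by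
  have hZψ : ∀ y : MM F, Z (ψ.symm y) = ψ.symm ((X : ℂ[X]) • y) := by
    intro y
    apply ψ.injective
    rw [hψZ, ψ.apply_symm_apply, ψ.apply_symm_apply]
  refine ⟨ψ.symm.toLinearMap ∘ₗ (YM τ hF) ∘ₗ ψ.toLinearMap, 1, ψ.symm (vM F hm), ?_, ?_⟩
  · -- the commutation relation
    simp only [Units.val_one, inv_one, one_mul, mul_one]
    have hYMp : ∀ y : MM F, YM τ hF ((X : ℂ[X]) • y) - (X : ℂ[X]) • YM τ hF y
        = τ • ((X : ℂ[X]) • (X : ℂ[X]) • (X : ℂ[X]) • y) := by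
      intro y
      have h := congrArg (fun f : Module.End ℂ (MM F) => f y) (YM_comm τ hF)
      simp only [LinearMap.sub_apply, Module.End.mul_apply, LinearMap.smul_apply] at h
      have h3 : ((ZM F) ^ 3) y = (X : ℂ[X]) • (X : ℂ[X]) • (X : ℂ[X]) • y := by
        rw [pow_succ, Module.End.mul_apply, pow_succ, Module.End.mul_apply, pow_succ,
          Module.End.mul_apply, pow_zero, Module.End.one_apply]
        rfl
      rw [h3] at h
      exact h
    apply LinearMap.ext
    intro x
    simp only [LinearMap.sub_apply, Module.End.mul_apply, LinearMap.smul_apply,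
      LinearMap.comp_apply, LinearEquiv.coe_coe]
    have e1 : ψ (Z x) = (X : ℂ[X]) • ψ x := hψZ x
    have e2 : Z (ψ.symm (YM τ hF (ψ x))) = ψ.symm ((X : ℂ[X]) • YM τ hF (ψ x)) := hZψ _
    rw [e1, e2, ← map_sub, hYMp, map_smul]
    have e3 : ((Z ^ 3) x) = ψ.symm ((X : ℂ[X]) • (X : ℂ[X]) • (X : ℂ[X]) • ψ x) := by
      rw [pow_succ, Module.End.mul_apply, pow_succ, Module.End.mul_apply, pow_succ,
        Module.End.mul_apply, pow_zero, Module.End.one_apply]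
      rw [show Z x = ψ.symm ((X : ℂ[X]) • ψ x) from by rw [← e1, ψ.symm_apply_apply], hZψ,
        hZψ]
    rw [e3]
  · -- cyclicity
    simp only [Units.val_one, inv_one, one_mul, mul_one]
    intro W hvW hYW hZW
    have hW' := model_cyclic τ hF hm (W.map ψ.toLinearMap) ?_ ?_ ?_
    · have h2 : W.map ψ.toLinearMap = (⊤ : Submodule ℂ V).map ψ.toLinearMap := by
        rw [hW', Submodule.map_top, LinearEquiv.range]
      exact Submodule.map_injective_of_injective ψ.injective h2
    · exact ⟨ψ.symm (vM F hm), hvW, ψ.apply_symm_apply _⟩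
    · rintro w ⟨x, hx, rfl⟩
      exact ⟨_, hYW x hx, ψ.apply_symm_apply _⟩
    · rintro w ⟨x, hx, rfl⟩
      exact ⟨Z x, hZW x hx, hψZ x⟩

end Model

theorem stmt_6 (V : Type) [AddCommGroup V] [Module ℂ V] [FiniteDimensional ℂ V]
    (τ : ℂ) (Z : Module.End ℂ V) (hZ : IsNilpotent Z) :
    ∃ (Y : Module.End ℂ V) (g : (Module.End ℂ V)ˣ) (v : V),
      (Y * ((g : Module.End ℂ V) * Z * ↑g⁻¹) - ((g : Module.End ℂ V) * Z * ↑g⁻¹) * Y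
        = τ • ((g : Module.End ℂ V) * Z * ↑g⁻¹) ^ 3) ∧
      (∀ W : Submodule ℂ V, v ∈ W → (∀ w ∈ W, Y w ∈ W) →
        (∀ w ∈ W, ((g : Module.End ℂ V) * Z * ↑g⁻¹) w ∈ W) → W = ⊤) := by
  classical
  obtain ⟨n, hn⟩ := hZ
  -- power smul on the AEval' module
  have hpow : ∀ (j : ℕ) (x : Module.AEval' Z),
      (X : ℂ[X]) ^ j • x = Module.AEval'.of Z ((Z ^ j) ((Module.AEval'.of Z).symm x)) := by
    intro j
    induction j with
    | zero => intro x; simp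
    | succ j ih =>
        intro x
        rw [pow_succ, mul_smul, ih, Module.AEval'.of_symm_X_smul, pow_succ,
          Module.End.mul_apply]
  have hTor : Module.IsTorsion ℂ[X] (Module.AEval' Z) := by
    intro x
    refine ⟨⟨(X : ℂ[X]) ^ n, mem_nonZeroDivisors_of_ne_zero (pow_ne_zero _ Polynomial.X_ne_zero)⟩, ?_⟩
    show (X : ℂ[X]) ^ n • x = 0
    rw [hpow n x, hn]
    simp
  obtain ⟨ι, fι, p, hp, e, ⟨eq1⟩⟩ :=
    Module.equiv_directSum_of_isTorsion (M := Module.AEval' Z) hTor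
  -- each p i ^ e i spans the same ideal as X ^ e i
  have hann : ∀ i : ι, (X : ℂ[X]) ^ n ∈ (ℂ[X] ∙ (p i ^ e i)) := by
    intro i
    have h0 : (X : ℂ[X]) ^ n •
        (eq1.symm (DirectSum.lof ℂ[X] ι (fun i => ℂ[X] ⧸ (ℂ[X] ∙ (p i ^ e i))) i
          (Submodule.Quotient.mk 1))) = 0 := by
      rw [hpow, hn]; simp
    have h1 := congrArg eq1 h0
    rw [map_smul, eq1.apply_symm_apply, map_zero, ← map_smul] at h1
    have h2 := congrArg (fun z => z i) h1
    simp only [DirectSum.lof_apply, DirectSum.zero_apply] at h2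
    rw [← Submodule.Quotient.mk_smul, smul_eq_mul, mul_one, Submodule.Quotient.mk_eq_zero] at h2
    exact h2
  have hspan : ∀ i : ι, (ℂ[X] ∙ (p i ^ e i)) = Ida (e i) := by
    intro i
    rcases Nat.eq_zero_or_pos (e i) with h0 | h1
    · rw [h0]
      show Submodule.span ℂ[X] {p i ^ 0} = Submodule.span ℂ[X] {(X : ℂ[X]) ^ 0}
      rw [pow_zero, pow_zero]
    · have hdvd : p i ^ e i ∣ (X : ℂ[X]) ^ n := by
        have hi := hann i
        rw [Submodule.mem_span_singleton] at hi
        obtain ⟨c, hc⟩ := hi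
        exact ⟨c, by rw [← hc, smul_eq_mul, mul_comm]⟩
      have hpX : p i ∣ (X : ℂ[X]) := by
        have hprime : Prime (p i) := UniqueFactorizationMonoid.irreducible_iff_prime.mp (hp i)
        exact hprime.dvd_of_dvd_pow (dvd_trans (dvd_pow_self _ h1.ne') hdvd)
      have hassoc : Associated (p i) (X : ℂ[X]) :=
        (hp i).associated_of_dvd Polynomial.irreducible_X hpX
      have hassoc2 : Associated (p i ^ e i) ((X : ℂ[X]) ^ e i) := hassoc.pow_pow
      exact Ideal.span_singleton_eq_span_singleton.mpr hassoc2
  -- sort the blocks by decreasing size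
  set m := Fintype.card ι with hm_def
  let b : Fin m ≃ ι := (Fintype.equivFin ι).symm
  let σ : Equiv.Perm (Fin m) := Tuple.sort (fun k => OrderDual.toDual (e (b k)))
  let c : Fin m ≃ ι := σ.trans b
  set F : Fin m → ℕ := fun k => e (c k) with hF_def
  have hF : Antitone F := by
    intro k l hkl
    exact Tuple.monotone_sort (fun k => OrderDual.toDual (e (b k))) hkl
  -- the chain of equivalences
  let E2 := DirectSum.lequivCongrLeft (M := fun i : ι => ℂ[X] ⧸ (ℂ[X] ∙ (p i ^ e i)))
    ℂ[X] c.symm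
  let E3 : (⨁ k : Fin m, ℂ[X] ⧸ (ℂ[X] ∙ (p (c k) ^ e (c k)))) ≃ₗ[ℂ[X]] MM F :=
    DFinsupp.mapRange.linearEquiv (fun k => Submodule.quotEquivOfEq _ _ (hspan (c k)))
  let ERR : Module.AEval' Z ≃ₗ[ℂ[X]] MM F := (eq1.trans E2).trans E3
  let ψ : V ≃ₗ[ℂ] MM F :=
    (Module.AEval'.of Z).trans (ERR.restrictScalars ℂ)
  have hψZ : ∀ x : V, ψ (Z x) = (X : ℂ[X]) • ψ x := by
    intro x
    show ERR (Module.AEval'.of Z (Z x)) = (X : ℂ[X]) • ERR (Module.AEval'.of Z x)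
    rw [← map_smul, Module.AEval'.X_smul_of]
  have hZψ : ∀ y : MM F, Z (ψ.symm y) = ψ.symm ((X : ℂ[X]) • y) := by
    intro y
    apply ψ.injective
    rw [hψZ, ψ.apply_symm_apply, ψ.apply_symm_apply]
  rcases Nat.eq_zero_or_pos m with hm0 | hm
  · -- degenerate case : V is trivial
    haveI : IsEmpty (Fin m) := by rw [hm0]; infer_instance
    haveI : ∀ k : Fin m, Subsingleton (Qa (F k)) := fun k => isEmptyElim k
    haveI : Subsingleton (MM F) := by
      constructor
      intro a b'
      exact DFinsupp.ext (fun k => isEmptyElim k)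
    haveI : Subsingleton V := ψ.toEquiv.subsingleton
    exact aux_trivial V τ Z
  · exact aux_transfer V τ Z hF hm ψ hψZ
end

section
/- In the free associative ℂ-algebra on generators x, Y̲, Z̲, ∂ subject to the relations of operators on V[x] = V ⊗ ℂ[x] — namely x commutes with Y̲ and Z̲, [∂,x] = 1 (as operators, ∂ = ∂_x), Y̲Z̲ - Z̲Y̲ = τZ̲³ — the operators y := xY̲ - τx²Z̲²∂ and z := xZ̲ satisfy [x,z] = 0, [y,z] = 0, and [x,y] = τz². -/
private lemma swap_lift {A : Type} [Ring A] {a b : A} (h : a * b = b * a) :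
    ∀ t : A, a * (b * t) = b * (a * t) := fun t => by
  rw [← mul_assoc, h, mul_assoc]

theorem stmt_9 {A : Type} [Ring A] [Algebra ℂ A] (τ : ℂ) (x Y Z D : A)
    (hxY : x * Y = Y * x) (hxZ : x * Z = Z * x)
    (hDx : D * x - x * D = 1)
    (hDY : D * Y = Y * D) (hDZ : D * Z = Z * D)
    (hYZ : Y * Z - Z * Y = τ • Z ^ 3)
    (y z : A) (hy : y = x * Y - τ • (x ^ 2 * Z ^ 2 * D)) (hz : z = x * Z) :
    x * z - z * x = 0 ∧ y * z - z * y = 0 ∧ x * y - y * x = τ • z ^ 2 := by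
  subst hy hz
  set c : A := algebraMap ℂ A τ with hc
  have hsmul : ∀ a : A, τ • a = c * a := fun a => (Algebra.smul_def τ a)
  have hxc : x * c = c * x := (Algebra.commutes τ x).symm
  have hZc : Z * c = c * Z := (Algebra.commutes τ Z).symm
  have hYc : Y * c = c * Y := (Algebra.commutes τ Y).symm
  have hDc : D * c = c * D := (Algebra.commutes τ D).symm
  have hYx : Y * x = x * Y := hxY.symm
  have hZx : Z * x = x * Z := hxZ.symm
  have hDY' : D * Y = Y * D := hDY
  have hDZ' : D * Z = Z * D := hDZ
  have hDx' : D * x = x * D + 1 := by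
    rw [eq_add_of_sub_eq hDx, add_comm]
  have h3 : (Z : A) ^ 3 = Z * (Z * Z) := by
    rw [pow_succ, pow_succ, pow_one, mul_assoc]
  have hYZ' : Y * Z = Z * Y + c * (Z * (Z * Z)) := by
    rw [eq_add_of_sub_eq hYZ, add_comm, hsmul, h3]
  have lYx := swap_lift hYx
  have lZx := swap_lift hZx
  have lDY := swap_lift hDY'
  have lDZ := swap_lift hDZ'
  have lxc := swap_lift hxc
  have lZc := swap_lift hZc
  have lYc := swap_lift hYc
  have lDc := swap_lift hDc
  have lDx : ∀ t : A, D * (x * t) = x * (D * t) + t := fun t => by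
    rw [← mul_assoc, hDx', add_mul, mul_assoc, one_mul]
  have lYZ : ∀ t : A, Y * (Z * t) = Z * (Y * t) + c * (Z * (Z * (Z * t))) := fun t => by
    rw [← mul_assoc, hYZ', add_mul, mul_assoc, mul_assoc, mul_assoc, mul_assoc]
  refine ⟨?_, ?_, ?_⟩
  · simp only [mul_assoc, mul_add, add_mul, mul_sub, sub_mul, mul_one, one_mul,
      hYx, hZx, hDx', hDY', hDZ', hYZ', hxc, hZc, hYc, hDc,
      lYx, lZx, lDx, lDY, lDZ, lYZ, lxc, lZc, lYc, lDc]
    abel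
  · simp only [hsmul, pow_succ, pow_one, pow_zero, mul_assoc, mul_add, add_mul, mul_sub, sub_mul,
      mul_one, one_mul,
      hYx, hZx, hDx', hDY', hDZ', hYZ', hxc, hZc, hYc, hDc,
      lYx, lZx, lDx, lDY, lDZ, lYZ, lxc, lZc, lYc, lDc]
    abel
  · simp only [hsmul, pow_succ, pow_one, pow_zero, mul_assoc, mul_add, add_mul, mul_sub, sub_mul,
      mul_one, one_mul,
      hYx, hZx, hDx', hDY', hDZ', hYZ', hxc, hZc, hYc, hDc,
      lYx, lZx, lDx, lDY, lDZ, lYZ, lxc, lZc, lYc, lDc]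
    abel
end

section
/- Conversely, suppose x is an invertible operator on a vector space W, and y, z are operators on W satisfying x²Z = xZx, xYxZ = xZxY, and x²Y - xYx = τxZxZ, where Y := x⁻¹y and Z := x⁻¹z. Then [Y,Z] = τZ³. -/
theorem stmt_10 {W : Type} [AddCommGroup W] [Module ℂ W] (τ : ℂ)
    (x : (Module.End ℂ W)ˣ) (y z Y Z : Module.End ℂ W)
    (hY : Y = (↑x⁻¹ : Module.End ℂ W) * y) (hZ : Z = (↑x⁻¹ : Module.End ℂ W) * z)
    (h1 : (x : Module.End ℂ W) ^ 2 * Z = (x : Module.End ℂ W) * Z * x)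
    (h2 : (x : Module.End ℂ W) * Y * x * Z = (x : Module.End ℂ W) * Z * x * Y)
    (h3 : (x : Module.End ℂ W) ^ 2 * Y - (x : Module.End ℂ W) * Y * x
        = τ • ((x : Module.End ℂ W) * Z * x * Z)) :
    Y * Z - Z * Y = τ • Z ^ 3 := by
  have hi : (↑x⁻¹ : Module.End ℂ W) * ↑x = 1 := x.inv_mul
  -- x commutes with Z
  have hc : (↑x : Module.End ℂ W) * Z = Z * ↑x := by
    have h := congrArg (fun a => (↑x⁻¹ : Module.End ℂ W) * a) h1
    simpa [sq, ← mul_assoc, hi] using h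
  -- x Y - Y x = τ • (x Z Z)
  have h3' : (↑x : Module.End ℂ W) * Y - Y * ↑x = τ • ((↑x : Module.End ℂ W) * Z * Z) := by
    have h := congrArg (fun a => (↑x⁻¹ : Module.End ℂ W) * a) h3
    simp only [sq, mul_sub, mul_smul_comm, ← mul_assoc, hi, one_mul] at h
    rw [h]
    congr 1
    rw [← hc]
  -- x⁻¹ Y x = Y - τ • Z²
  have hYx : (↑x⁻¹ : Module.End ℂ W) * Y * ↑x = Y - τ • (Z * Z) := by
    have h := congrArg (fun a => (↑x⁻¹ : Module.End ℂ W) * a) h3'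
    simp only [mul_sub, mul_smul_comm, ← mul_assoc, hi, one_mul] at h
    exact (sub_eq_of_eq_add' (sub_eq_iff_eq_add.mp h)).symm
  have h2' : Y * ↑x * Z = Z * (↑x : Module.End ℂ W) * Y := by
    have h := congrArg (fun a => (↑x⁻¹ : Module.End ℂ W) * a) h2
    simpa [← mul_assoc, hi] using h
  have hZfix : (↑x⁻¹ : Module.End ℂ W) * Z * ↑x = Z := by
    rw [mul_assoc, ← hc, ← mul_assoc, hi, one_mul]
  -- Z Y = Y Z - τ • Z³
  have hZY : Z * Y = Y * Z - τ • (Z * Z * Z) := by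
    have h := congrArg (fun a => (↑x⁻¹ : Module.End ℂ W) * a) h2'
    simp only [← mul_assoc] at h
    rw [hYx, hZfix, sub_mul, smul_mul_assoc, mul_assoc] at h
    exact h.symm
  rw [hZY, sub_sub_cancel, pow_succ, pow_two]
end

section
/- The degree-n component of the algebra A^τ = ℂ⟨x,y,z⟩/([x,z]=[y,z]=0, [x,y]=τz²) has dimension (n+1)(n+2)/2, i.e. A^τ has the same Hilbert series as the commutative polynomial ring in three variables. -/
noncomputable section

/-- The relations of the algebra `A^τ = ℂ⟨x,y,z⟩/([x,z]=[y,z]=0, [x,y]=τz²)`,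
with generators `x = ι 0`, `y = ι 1`, `z = ι 2`. -/
inductive ARel (τ : ℂ) : FreeAlgebra ℂ (Fin 3) → FreeAlgebra ℂ (Fin 3) → Prop
  | xz : ARel τ (FreeAlgebra.ι ℂ 0 * FreeAlgebra.ι ℂ 2) (FreeAlgebra.ι ℂ 2 * FreeAlgebra.ι ℂ 0)
  | yz : ARel τ (FreeAlgebra.ι ℂ 1 * FreeAlgebra.ι ℂ 2) (FreeAlgebra.ι ℂ 2 * FreeAlgebra.ι ℂ 1)
  | xy : ARel τ (FreeAlgebra.ι ℂ 0 * FreeAlgebra.ι ℂ 1)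
      (FreeAlgebra.ι ℂ 1 * FreeAlgebra.ι ℂ 0 + τ • (FreeAlgebra.ι ℂ 2 * FreeAlgebra.ι ℂ 2))

/-- The algebra `A^τ`. -/
abbrev ATau (τ : ℂ) := RingQuot (ARel τ)

/-- The generators `x, y, z` of `A^τ`. -/
def agen (τ : ℂ) (i : Fin 3) : ATau τ := RingQuot.mkAlgHom ℂ (ARel τ) (FreeAlgebra.ι ℂ i)

/-- The degree-`n` component of `A^τ`: the span of all products of `n` generators. -/
def acomp (τ : ℂ) (n : ℕ) : Submodule ℂ (ATau τ) :=
  Submodule.span ℂ ((fun l : List (Fin 3) => (l.map (agen τ)).prod) '' {l | l.length = n})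

namespace ATauAux

variable (τ : ℂ)

lemma rxz : agen τ 0 * agen τ 2 = agen τ 2 * agen τ 0 := by
  simpa [agen, map_mul] using RingQuot.mkAlgHom_rel ℂ (ARel.xz (τ := τ))

lemma ryz : agen τ 1 * agen τ 2 = agen τ 2 * agen τ 1 := by
  simpa [agen, map_mul] using RingQuot.mkAlgHom_rel ℂ (ARel.yz (τ := τ))

lemma rxy : agen τ 0 * agen τ 1 =
    agen τ 1 * agen τ 0 + τ • (agen τ 2 * agen τ 2) := by
  simpa [agen, map_mul, map_add] using RingQuot.mkAlgHom_rel ℂ (ARel.xy (τ := τ))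

lemma comm_xz : Commute (agen τ 0) (agen τ 2) := rxz τ
lemma comm_yz : Commute (agen τ 1) (agen τ 2) := ryz τ

/-- `z^a y^b x^c`. -/
def mono (a b c : ℕ) : ATau τ := agen τ 2 ^ a * agen τ 1 ^ b * agen τ 0 ^ c

lemma x_mul_ypow (b : ℕ) : agen τ 0 * agen τ 1 ^ (b + 1) =
    agen τ 1 ^ (b + 1) * agen τ 0
      + ((b + 1 : ℕ) : ℂ) • (τ • (agen τ 2 ^ 2 * agen τ 1 ^ b)) := by
  induction b with
  | zero =>
    simp only [zero_add, pow_one, pow_zero, mul_one, Nat.cast_one, one_smul, sq]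
    exact rxy τ
  | succ b ih =>
    have h1 : agen τ 0 * agen τ 1 ^ (b + 2) = (agen τ 0 * agen τ 1) * agen τ 1 ^ (b + 1) := by
      rw [mul_assoc, ← pow_succ']
    rw [h1, rxy τ, add_mul, mul_assoc, ih]
    have hcz : agen τ 1 * (agen τ 2 ^ 2 * agen τ 1 ^ b) = agen τ 2 ^ 2 * agen τ 1 ^ (b+1) := by
      rw [← mul_assoc, ((comm_yz τ).pow_right 2).eq, mul_assoc, ← pow_succ']
    rw [mul_add, ← mul_assoc, ← pow_succ']
    rw [mul_smul_comm, mul_smul_comm, hcz]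
    have hsm : agen τ 2 * agen τ 2 * agen τ 1 ^ (b+1)
        = agen τ 2 ^ 2 * agen τ 1 ^ (b+1) := by rw [sq]
    rw [smul_mul_assoc, hsm]
    push_cast
    module

/-- span of monomials of total degree `n`. -/
def MSet (n : ℕ) : Set (ATau τ) := {v | ∃ a b c : ℕ, a + b + c = n ∧ v = mono τ a b c}

def Sp (n : ℕ) : Submodule ℂ (ATau τ) := Submodule.span ℂ (MSet τ n)

lemma mono_mem_Sp {a b c n : ℕ} (h : a + b + c = n) : mono τ a b c ∈ Sp τ n :=
  Submodule.subset_span ⟨a, b, c, h, rfl⟩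

lemma gen_mul_mono (i : Fin 3) (a b c : ℕ) :
    agen τ i * mono τ a b c ∈ Sp τ (a + b + c + 1) := by
  fin_cases i
  · -- x
    show agen τ 0 * mono τ a b c ∈ Sp τ (a + b + c + 1)
    have hxz : agen τ 0 * agen τ 2 ^ a = agen τ 2 ^ a * agen τ 0 :=
      ((comm_xz τ).pow_right a).eq
    cases b with
    | zero =>
      have : agen τ 0 * mono τ a 0 c = mono τ a 0 (c + 1) := by
        simp only [mono, pow_zero, mul_one]
        rw [← mul_assoc, hxz, mul_assoc, ← pow_succ']
      rw [this]
      exact mono_mem_Sp τ (by omega)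
    | succ b =>
      have key : agen τ 0 * mono τ a (b+1) c
          = mono τ a (b+1) (c+1)
            + ((b + 1 : ℕ) : ℂ) • (τ • mono τ (a+2) b c) := by
        simp only [mono]
        rw [← mul_assoc, ← mul_assoc, hxz, mul_assoc (agen τ 2 ^ a), x_mul_ypow τ b]
        rw [mul_add, add_mul, mul_smul_comm, mul_smul_comm, smul_mul_assoc, smul_mul_assoc]
        congr 1
        · rw [← mul_assoc, mul_assoc _ (agen τ 0) (agen τ 0 ^ c), ← pow_succ']
        · congr 2
          rw [← mul_assoc, ← pow_add]
      rw [key]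
      exact add_mem (mono_mem_Sp τ (by omega))
        (Submodule.smul_mem _ _ (Submodule.smul_mem _ _ (mono_mem_Sp τ (by omega))))
  · -- y
    show agen τ 1 * mono τ a b c ∈ Sp τ (a + b + c + 1)
    have hyz : agen τ 1 * agen τ 2 ^ a = agen τ 2 ^ a * agen τ 1 :=
      ((comm_yz τ).pow_right a).eq
    have : agen τ 1 * mono τ a b c = mono τ a (b+1) c := by
      simp only [mono]
      rw [← mul_assoc, ← mul_assoc, hyz, mul_assoc (agen τ 2 ^ a), ← mul_assoc, mul_assoc _ (agen τ 1) _, ← pow_succ']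
    rw [this]
    exact mono_mem_Sp τ (by omega)
  · -- z
    show agen τ 2 * mono τ a b c ∈ Sp τ (a + b + c + 1)
    have : agen τ 2 * mono τ a b c = mono τ (a+1) b c := by
      simp only [mono]
      rw [← mul_assoc, ← mul_assoc, ← pow_succ']
    rw [this]
    exact mono_mem_Sp τ (by omega)

lemma mul_mem_Sp {n : ℕ} (i : Fin 3) {v : ATau τ} (hv : v ∈ Sp τ n) :
    agen τ i * v ∈ Sp τ (n + 1) := by
  induction hv using Submodule.span_induction with
  | mem w hw =>
    obtain ⟨a, b, c, habc, rfl⟩ := hw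
    subst habc
    exact gen_mul_mono τ i a b c
  | zero => simp only [mul_zero]; exact zero_mem _
  | add u w _ _ hu hw => rw [mul_add]; exact add_mem hu hw
  | smul r u _ hu => rw [mul_smul_comm]; exact Submodule.smul_mem _ _ hu

lemma word_mem (l : List (Fin 3)) : (l.map (agen τ)).prod ∈ Sp τ l.length := by
  induction l with
  | nil =>
    have : (1 : ATau τ) = mono τ 0 0 0 := by simp [mono]
    rw [List.map_nil, List.prod_nil, this]
    exact mono_mem_Sp τ (n := 0) rfl
  | cons i l ih =>
    simpa using mul_mem_Sp τ i ih

lemma mono_mem_acomp {a b c n : ℕ} (h : a + b + c = n) : mono τ a b c ∈ acomp τ n := by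
  apply Submodule.subset_span
  refine ⟨List.replicate a 2 ++ List.replicate b 1 ++ List.replicate c 0, by simp; omega, ?_⟩
  simp [mono, List.prod_replicate, mul_assoc]

lemma acomp_eq_Sp (n : ℕ) : acomp τ n = Sp τ n := by
  apply le_antisymm
  · rw [acomp, Submodule.span_le]
    rintro v ⟨l, hl, rfl⟩
    have : l.length = n := hl
    subst this
    exact word_mem τ l
  · rw [Sp, Submodule.span_le]
    rintro v ⟨a, b, c, h, rfl⟩
    exact mono_mem_acomp τ h

/-! ### Representation on polynomials -/

open MvPolynomial

abbrev PM := MvPolynomial (Fin 3) ℂ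

def opY : Module.End ℂ PM := LinearMap.mulLeft ℂ (X 0)
def opZ : Module.End ℂ PM := LinearMap.mulLeft ℂ (X 1)
def opX : Module.End ℂ PM :=
  LinearMap.mulLeft ℂ (X 2) + τ • ((LinearMap.mulLeft ℂ (X 1 ^ 2)).comp (pderiv 0).toLinearMap)

def gens : Fin 3 → Module.End ℂ PM := fun i =>
  match i with
  | 0 => opX τ
  | 1 => opY
  | 2 => opZ

def Frep : FreeAlgebra ℂ (Fin 3) →ₐ[ℂ] Module.End ℂ PM :=
  FreeAlgebra.lift ℂ (gens τ)

lemma Frep_rel : ∀ a b : FreeAlgebra ℂ (Fin 3), ARel τ a b → Frep τ a = Frep τ b := by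
  intro a b h
  cases h with
  | xz =>
    apply LinearMap.ext; intro p
    simp [Frep, gens, opX, opY, opZ, Module.End.mul_apply, LinearMap.mulLeft_apply,
      pderiv_mul, pderiv_X_of_ne (by decide : (1:Fin 3) ≠ 0), smul_eq_C_mul]
    ring
  | yz =>
    apply LinearMap.ext; intro p
    simp [Frep, gens, opX, opY, opZ, Module.End.mul_apply, LinearMap.mulLeft_apply]
    ring
  | xy =>
    apply LinearMap.ext; intro p
    simp [Frep, gens, opX, opY, opZ, Module.End.mul_apply, LinearMap.mulLeft_apply,
      pderiv_mul, pderiv_X_self, pderiv_X_of_ne (by decide : (1:Fin 3) ≠ 0), smul_eq_C_mul]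
    ring

def phi : ATau τ →ₐ[ℂ] Module.End ℂ PM :=
  RingQuot.liftAlgHom ℂ ⟨Frep τ, Frep_rel τ⟩

lemma phi_agen (i : Fin 3) : phi τ (agen τ i) = gens τ i := by
  simp [phi, agen, RingQuot.liftAlgHom_mkAlgHom_apply, Frep]

def psi : ATau τ →ₗ[ℂ] PM where
  toFun v := phi τ v 1
  map_add' u v := by simp [map_add]
  map_smul' c v := by simp [map_smul]

lemma mulLeft_pow_apply (r : PM) (k : ℕ) (p : PM) :
    ((LinearMap.mulLeft ℂ r) ^ k) p = r ^ k * p := by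
  induction k with
  | zero => simp
  | succ k ih => rw [pow_succ', pow_succ', Module.End.mul_apply, ih, LinearMap.mulLeft_apply, mul_assoc]

lemma opX_pow_one (c : ℕ) : ((opX τ) ^ c) 1 = X 2 ^ c := by
  induction c with
  | zero => simp
  | succ c ih =>
    rw [pow_succ', Module.End.mul_apply, ih]
    simp [opX, LinearMap.mulLeft_apply, pderiv_pow, pderiv_X_of_ne (by decide : (2:Fin 3) ≠ 0),
      pow_succ']

lemma psi_mono (a b c : ℕ) :
    psi τ (mono τ a b c) = X 1 ^ a * (X 0 ^ b * X 2 ^ c) := by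
  have : phi τ (mono τ a b c) = (opZ ^ a) * (opY ^ b) * ((opX τ) ^ c) := by
    simp [mono, map_mul, map_pow, phi_agen, gens]
  simp only [psi, LinearMap.coe_mk, AddHom.coe_mk, this, Module.End.mul_apply]
  rw [opX_pow_one, opY, opZ, mulLeft_pow_apply, mulLeft_pow_apply]

lemma psi_mono' (a b c : ℕ) :
    psi τ (mono τ a b c) = MvPolynomial.monomial
      (Finsupp.single 1 a + (Finsupp.single 0 b + Finsupp.single 2 c)) (1 : ℂ) := by
  rw [psi_mono, X_pow_eq_monomial, X_pow_eq_monomial, X_pow_eq_monomial,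
    monomial_mul, monomial_mul, one_mul, one_mul]

/-! ### Index set and counting -/

def idx (n : ℕ) : Finset ((_ : ℕ) × ℕ) :=
  (Finset.range (n+1)).sigma fun a => Finset.range (n + 1 - a)

def fam (n : ℕ) : idx n → ATau τ := fun q => mono τ q.1.1 q.1.2 (n - q.1.1 - q.1.2)

lemma fam_range (n : ℕ) : Set.range (fam τ n) = MSet τ n := by
  ext v
  constructor
  · rintro ⟨⟨⟨a, b⟩, hq⟩, rfl⟩
    rw [idx, Finset.mem_sigma, Finset.mem_range, Finset.mem_range] at hq
    dsimp only at hq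
    exact ⟨a, b, n - a - b, by omega, rfl⟩
  · rintro ⟨a, b, c, habc, rfl⟩
    refine ⟨⟨⟨a, b⟩, ?_⟩, ?_⟩
    · have m1 : a ∈ Finset.range (n+1) := Finset.mem_range.2 (by omega)
      have m2 : b ∈ Finset.range (n+1-a) := Finset.mem_range.2 (by omega)
      exact Finset.mem_sigma.2 ⟨m1, m2⟩
    · show mono τ a b (n - a - b) = mono τ a b c
      congr 1
      omega

lemma fam_li (n : ℕ) : LinearIndependent ℂ (fam τ n) := by
  apply LinearIndependent.of_comp (psi τ)
  have he : (psi τ) ∘ (fam τ n) = fun q : idx n =>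
      (MvPolynomial.basisMonomials (Fin 3) ℂ)
        (Finsupp.single 1 q.1.1 + (Finsupp.single 0 q.1.2 + Finsupp.single 2 (n - q.1.1 - q.1.2))) := by
    funext q
    simp [Function.comp, fam, psi_mono', coe_basisMonomials]
  rw [he]
  apply (MvPolynomial.basisMonomials (Fin 3) ℂ).linearIndependent.comp
  intro q q' h
  have h1 := congrArg (fun g => g 1) h
  have h0 := congrArg (fun g => g 0) h
  simp [Finsupp.single_apply] at h1 h0
  obtain ⟨⟨a, b⟩, hq⟩ := q
  obtain ⟨⟨a', b'⟩, hq'⟩ := q'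
  simp_all

lemma card_idx (n : ℕ) : (idx n).card = (n + 1) * (n + 2) / 2 := by
  rw [idx, Finset.card_sigma]
  simp only [Finset.card_range]
  have h1 : ∑ a ∈ Finset.range (n+1), (n + 1 - a) = ∑ a ∈ Finset.range (n+1), (a + 1) := by
    rw [← Finset.sum_range_reflect]
    apply Finset.sum_congr rfl
    intro a ha
    rw [Finset.mem_range] at ha
    omega
  rw [h1]
  have h2 : (∑ a ∈ Finset.range (n+1), (a + 1)) = (∑ a ∈ Finset.range (n+1), a) + (n+1) := by
    rw [Finset.sum_add_distrib]; simp
  have h3 : (∑ a ∈ Finset.range (n+1), a) * 2 = (n+1) * n := by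
    simpa using Finset.sum_range_id_mul_two (n+1)
  have h4 : (n+1) * (n+2) = (n+1) * n + 2 * (n+1) := by ring
  omega

end ATauAux

theorem stmt_12 (τ : ℂ) (n : ℕ) :
    Module.finrank ℂ (acomp τ n) = (n + 1) * (n + 2) / 2 := by
  rw [ATauAux.acomp_eq_Sp, ATauAux.Sp, ← ATauAux.fam_range τ n,
    finrank_span_eq_card (ATauAux.fam_li τ n), Fintype.card_coe, ATauAux.card_idx]

end
end

section
/- Let (Y,Z,v) be a triple on a finite-dimensional vector space V with [Y,Z] = τZ³ and v cyclic, and suppose V decomposes as a direct sum V = V₁ ⊕ V₂ of subspaces stable under both Y and Z, with v = v₁ + v₂. If the spectra of Y|_{V₁} and Y|_{V₂} are disjoint, then v₁ is cyclic for (Y|_{V₁}, Z|_{V₁}) and v₂ is cyclic for (Y|_{V₂}, Z|_{V₂}). -/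
private lemma aux_14 {V : Type} [AddCommGroup V] [Module ℂ V]
    (Y Z : Module.End ℂ V)
    (V₁ V₂ : Submodule ℂ V) (hd : Disjoint V₁ V₂)
    (hY1 : ∀ x ∈ V₁, Y x ∈ V₁) (hY2 : ∀ x ∈ V₂, Y x ∈ V₂)
    (hZ1 : ∀ x ∈ V₁, Z x ∈ V₁) (hZ2 : ∀ x ∈ V₂, Z x ∈ V₂)
    (v₁ v₂ : V) (hv₁ : v₁ ∈ V₁) (hv₂ : v₂ ∈ V₂)
    (hcyc : ∀ W : Submodule ℂ V, v₁ + v₂ ∈ W →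
      (∀ w ∈ W, Y w ∈ W) → (∀ w ∈ W, Z w ∈ W) → W = ⊤) :
    ∀ W : Submodule ℂ V₁, (⟨v₁, hv₁⟩ : V₁) ∈ W →
      (∀ w ∈ W, Y.restrict hY1 w ∈ W) → (∀ w ∈ W, Z.restrict hZ1 w ∈ W) → W = ⊤ := by
  intro W hvW hYW hZW
  set M : Submodule ℂ V := W.map V₁.subtype ⊔ V₂ with hMdef
  have hmaple : W.map V₁.subtype ≤ V₁ := Submodule.map_subtype_le _ _
  have hM : M = ⊤ := by
    apply hcyc
    · exact Submodule.add_mem _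
        (Submodule.mem_sup_left ⟨⟨v₁, hv₁⟩, hvW, rfl⟩)
        (Submodule.mem_sup_right hv₂)
    · intro w hw
      rcases Submodule.mem_sup.1 hw with ⟨a, ha, b, hb, rfl⟩
      rcases ha with ⟨u, hu, rfl⟩
      rw [map_add]
      exact Submodule.add_mem _
        (Submodule.mem_sup_left ⟨Y.restrict hY1 u, hYW u hu, rfl⟩)
        (Submodule.mem_sup_right (hY2 b hb))
    · intro w hw
      rcases Submodule.mem_sup.1 hw with ⟨a, ha, b, hb, rfl⟩
      rcases ha with ⟨u, hu, rfl⟩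
      rw [map_add]
      exact Submodule.add_mem _
        (Submodule.mem_sup_left ⟨Z.restrict hZ1 u, hZW u hu, rfl⟩)
        (Submodule.mem_sup_right (hZ2 b hb))
  have hW1 : V₁ ≤ W.map V₁.subtype := by
    intro x hx
    have hxM : x ∈ M := by rw [hM]; trivial
    rcases Submodule.mem_sup.1 hxM with ⟨a, ha, b, hb, hx'⟩
    have hbV1 : b ∈ V₁ := by
      have : b = x - a := by rw [← hx']; abel
      rw [this]
      exact Submodule.sub_mem _ hx (hmaple ha)
    have hb0 : b = 0 := by
      have := hd.le_bot ⟨hbV1, hb⟩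
      simpa using this
    rw [← hx', hb0, add_zero]
    exact ha
  rw [eq_top_iff]
  intro w _
  rcases hW1 w.2 with ⟨u, hu, h⟩
  have : u = w := Subtype.ext h
  rwa [← this]

theorem stmt_14 (V : Type) [AddCommGroup V] [Module ℂ V] [FiniteDimensional ℂ V]
    (τ : ℂ) (Y Z : Module.End ℂ V)
    (hrel : Y * Z - Z * Y = τ • Z ^ 3)
    (V₁ V₂ : Submodule ℂ V) (hcompl : IsCompl V₁ V₂)
    (hY1 : ∀ x ∈ V₁, Y x ∈ V₁) (hY2 : ∀ x ∈ V₂, Y x ∈ V₂)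
    (hZ1 : ∀ x ∈ V₁, Z x ∈ V₁) (hZ2 : ∀ x ∈ V₂, Z x ∈ V₂)
    (v₁ v₂ : V) (hv₁ : v₁ ∈ V₁) (hv₂ : v₂ ∈ V₂)
    (hcyc : ∀ W : Submodule ℂ V, v₁ + v₂ ∈ W →
      (∀ w ∈ W, Y w ∈ W) → (∀ w ∈ W, Z w ∈ W) → W = ⊤)
    (hdisj : ∀ μ : ℂ, ¬(Module.End.HasEigenvalue (Y.restrict hY1) μ ∧
      Module.End.HasEigenvalue (Y.restrict hY2) μ)) :
    (∀ W : Submodule ℂ V₁, (⟨v₁, hv₁⟩ : V₁) ∈ W →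
      (∀ w ∈ W, Y.restrict hY1 w ∈ W) → (∀ w ∈ W, Z.restrict hZ1 w ∈ W) → W = ⊤) ∧
    (∀ W : Submodule ℂ V₂, (⟨v₂, hv₂⟩ : V₂) ∈ W →
      (∀ w ∈ W, Y.restrict hY2 w ∈ W) → (∀ w ∈ W, Z.restrict hZ2 w ∈ W) → W = ⊤) := by
  constructor
  · exact aux_14 Y Z V₁ V₂ hcompl.disjoint hY1 hY2 hZ1 hZ2 v₁ v₂ hv₁ hv₂ hcyc
  · exact aux_14 Y Z V₂ V₁ hcompl.disjoint.symm hY2 hY1 hZ2 hZ1 v₂ v₁ hv₂ hv₁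
      (fun W h => hcyc W (by rwa [add_comm]))
end

section
/- Conversely (factorization of cyclicity): if V = V₁ ⊕ V₂ with Y, Z preserving each summand, vᵢ ∈ Vᵢ is cyclic for (Y|_{Vᵢ}, Z|_{Vᵢ}) for i = 1,2, and the spectra of Y|_{V₁} and Y|_{V₂} are disjoint, then v₁ + v₂ is cyclic for (Y,Z) on V. -/
open Polynomial

lemma aeval_restrict_comm {V : Type} [AddCommGroup V] [Module ℂ V]
    (Y : Module.End ℂ V) (V₁ : Submodule ℂ V) (hY1 : ∀ x ∈ V₁, Y x ∈ V₁)
    (p : ℂ[X]) (x : V₁) :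
    ((Polynomial.aeval (Y.restrict hY1) p) x : V) = (Polynomial.aeval Y p) (x : V) := by
  induction p using Polynomial.induction_on with
  | C a => simp [Polynomial.aeval_C, Module.algebraMap_end_apply]
  | add p q hp hq => simp [hp, hq]
  | monomial n a ih =>
    have : ∀ m : ℕ, (((Y.restrict hY1) ^ m) x : V) = (Y ^ m) (x : V) := by
      intro m
      induction m with
      | zero => simp
      | succ k ihk =>
        rw [pow_succ', pow_succ', Module.End.mul_apply, Module.End.mul_apply, ← ihk]
        exact LinearMap.restrict_coe_apply Y _ _
    simp only [map_mul, Polynomial.aeval_C, Polynomial.aeval_X, map_pow,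
      Module.End.mul_apply, Module.algebraMap_end_apply, SetLike.val_smul]
    rw [this]

lemma aeval_mem {V : Type} [AddCommGroup V] [Module ℂ V]
    (Y : Module.End ℂ V) (W : Submodule ℂ V) (hW : ∀ w ∈ W, Y w ∈ W)
    (p : ℂ[X]) (x : V) (hx : x ∈ W) : (Polynomial.aeval Y p) x ∈ W := by
  induction p using Polynomial.induction_on with
  | C a => simpa [Module.algebraMap_end_apply] using W.smul_mem a hx
  | add p q hp hq => simpa using W.add_mem hp hq
  | monomial n a ih =>
    have hpow : ∀ m : ℕ, (Y ^ m) x ∈ W := by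
      intro m
      induction m with
      | zero => simpa
      | succ k ihk => rw [pow_succ', Module.End.mul_apply]; exact hW _ ihk
    simpa [Module.algebraMap_end_apply, Module.End.mul_apply] using
      W.smul_mem a (hpow (n + 1))

theorem stmt_15 (V : Type) [AddCommGroup V] [Module ℂ V] [FiniteDimensional ℂ V]
    (Y Z : Module.End ℂ V)
    (V₁ V₂ : Submodule ℂ V) (hcompl : IsCompl V₁ V₂)
    (hY1 : ∀ x ∈ V₁, Y x ∈ V₁) (hY2 : ∀ x ∈ V₂, Y x ∈ V₂)
    (hZ1 : ∀ x ∈ V₁, Z x ∈ V₁) (hZ2 : ∀ x ∈ V₂, Z x ∈ V₂)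
    (v₁ v₂ : V) (hv₁ : v₁ ∈ V₁) (hv₂ : v₂ ∈ V₂)
    (hcyc₁ : ∀ W : Submodule ℂ V₁, (⟨v₁, hv₁⟩ : V₁) ∈ W →
      (∀ w ∈ W, Y.restrict hY1 w ∈ W) → (∀ w ∈ W, Z.restrict hZ1 w ∈ W) → W = ⊤)
    (hcyc₂ : ∀ W : Submodule ℂ V₂, (⟨v₂, hv₂⟩ : V₂) ∈ W →
      (∀ w ∈ W, Y.restrict hY2 w ∈ W) → (∀ w ∈ W, Z.restrict hZ2 w ∈ W) → W = ⊤)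
    (hdisj : ∀ μ : ℂ, ¬(Module.End.HasEigenvalue (Y.restrict hY1) μ ∧
      Module.End.HasEigenvalue (Y.restrict hY2) μ)) :
    ∀ W : Submodule ℂ V, v₁ + v₂ ∈ W →
      (∀ w ∈ W, Y w ∈ W) → (∀ w ∈ W, Z w ∈ W) → W = ⊤ := by
  intro W hvW hYW hZW
  set A₁ := Y.restrict hY1
  set A₂ := Y.restrict hY2
  have hcop : IsCoprime (minpoly ℂ A₁) (minpoly ℂ A₂) := by
    rw [Polynomial.isCoprime_iff_aeval_ne_zero_of_isAlgClosed (k := ℂ) ℂ (minpoly ℂ A₁) (minpoly ℂ A₂)]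
    intro μ
    by_contra h
    push_neg at h
    exact hdisj μ ⟨Module.End.hasEigenvalue_of_isRoot (by simpa using h.1),
      Module.End.hasEigenvalue_of_isRoot (by simpa using h.2)⟩
  obtain ⟨a, b, hab⟩ := hcop
  set p := b * minpoly ℂ A₂ with hp
  have hA1p : Polynomial.aeval A₁ p = 1 := by
    have h := congrArg (Polynomial.aeval A₁) hab
    rw [map_add, map_mul, map_mul, minpoly.aeval, mul_zero, zero_add, map_one] at h
    rw [hp, map_mul]
    exact h
  have hA2p : Polynomial.aeval A₂ p = 0 := by
    rw [hp, map_mul, minpoly.aeval, mul_zero]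
  -- v₁ ∈ W
  have hv1W : v₁ ∈ W := by
    have h1 : (Polynomial.aeval Y p) v₁ = v₁ := by
      have := aeval_restrict_comm Y V₁ hY1 p ⟨v₁, hv₁⟩
      rw [hA1p] at this
      simpa using this.symm
    have h2 : (Polynomial.aeval Y p) v₂ = 0 := by
      have := aeval_restrict_comm Y V₂ hY2 p ⟨v₂, hv₂⟩
      rw [hA2p] at this
      simpa using this.symm
    have := aeval_mem Y W hYW p (v₁ + v₂) hvW
    rwa [map_add, h1, h2, add_zero] at this
  have hv2W : v₂ ∈ W := by
    have := W.sub_mem hvW hv1W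
    simpa using this
  -- W contains V₁
  have hsub1 : V₁ ≤ W := by
    set W₁ : Submodule ℂ V₁ := W.comap V₁.subtype with hW₁
    have : W₁ = ⊤ := by
      apply hcyc₁
      · exact hv1W
      · intro w hw
        simpa [W₁, A₁, LinearMap.restrict_apply] using hYW _ hw
      · intro w hw
        simpa [W₁, LinearMap.restrict_apply] using hZW _ hw
    intro x hx
    have : (⟨x, hx⟩ : V₁) ∈ W₁ := this ▸ Submodule.mem_top
    simpa [W₁] using this
  have hsub2 : V₂ ≤ W := by
    set W₂ : Submodule ℂ V₂ := W.comap V₂.subtype with hW₂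
    have : W₂ = ⊤ := by
      apply hcyc₂
      · exact hv2W
      · intro w hw
        simpa [W₂, A₂, LinearMap.restrict_apply] using hYW _ hw
      · intro w hw
        simpa [W₂, LinearMap.restrict_apply] using hZW _ hw
    intro x hx
    have : (⟨x, hx⟩ : V₂) ∈ W₂ := this ▸ Submodule.mem_top
    simpa [W₂] using this
  rw [eq_top_iff, ← hcompl.sup_eq_top]
  exact sup_le hsub1 hsub2
end
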